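/- Let G be a group, k ∈ ℕ, and define the generalised commutator subgroups Ḡ_k = {g ∈ G : g^n ∈ G_k for some n ∈ ℕ}, where G_k is the k-th term of the lower central series. If [Ḡ_k : Ḡ_{k+1}] < ∞ then Ḡ_j = Ḡ_k for all j ≥ k; in particular ⋂_{i=1}^∞ Ḡ_i = Ḡ_k. -/

import Mathlib

open scoped commutatorElement

section Aux

variable {G : Type*} [Group G]

/-- Image of `G_{k+1}` in `G ⧸ G_{k+2}` is central. -/
private lemma aux_central (k : ℕ) {a : G} (ha : a ∈ (⊤ : Subgroup G).lowerCentralSeries (k + 1)) (b : G) :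
    ((a : G ⧸ (⊤ : Subgroup G).lowerCentralSeries (k + 2)) * b = b * a) := by
  rw [← commutatorElement_eq_one_iff_mul_comm]
  have h : ⁅a, b⁆ ∈ (⊤ : Subgroup G).lowerCentralSeries (k + 2) := by
    rw [show (⊤ : Subgroup G).lowerCentralSeries (k + 2) = ⁅(⊤ : Subgroup G).lowerCentralSeries (k + 1), ⊤⁆ from rfl]
    exact Subgroup.commutator_mem_commutator ha (Subgroup.mem_top b)
  calc ⁅(a : G ⧸ (⊤ : Subgroup G).lowerCentralSeries (k + 2)), (b : G ⧸ (⊤ : Subgroup G).lowerCentralSeries (k + 2))⁆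
      = ((⁅a, b⁆ : G) : G ⧸ (⊤ : Subgroup G).lowerCentralSeries (k + 2)) := rfl
    _ = 1 := (QuotientGroup.eq_one_iff _).2 h

private lemma aux_comm_pow (k : ℕ) {x : G} (hx : x ∈ (⊤ : Subgroup G).lowerCentralSeries k) (g : G) (n : ℕ) :
    ((⁅x, g⁆ ^ n : G) : G ⧸ (⊤ : Subgroup G).lowerCentralSeries (k + 2)) = ((⁅x ^ n, g⁆ : G)) := by
  induction n with
  | zero => simp
  | succ n ih =>
    have hmem : ⁅x ^ n, g⁆ ∈ (⊤ : Subgroup G).lowerCentralSeries (k + 1) := by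
      rw [show (⊤ : Subgroup G).lowerCentralSeries (k + 1) = ⁅(⊤ : Subgroup G).lowerCentralSeries k, ⊤⁆ from rfl]
      exact Subgroup.commutator_mem_commutator (pow_mem hx n) (Subgroup.mem_top g)
    have hid : ⁅x ^ (n + 1), g⁆ = x * ⁅x ^ n, g⁆ * x⁻¹ * ⁅x, g⁆ := by
      simp only [commutatorElement_def, pow_succ']
      group
    rw [hid]
    rw [pow_succ, QuotientGroup.mk_mul, ih]
    have hc := aux_central k hmem x
    rw [QuotientGroup.mk_mul, QuotientGroup.mk_mul, QuotientGroup.mk_mul,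
      QuotientGroup.mk_inv, ← hc]
    group

/-- If `x ∈ G_k` and `x ^ m ∈ G_{k+1}` then `⁅x, g⁆ ^ m ∈ G_{k+2}`. -/
private lemma aux_key (k : ℕ) {x : G} (hx : x ∈ (⊤ : Subgroup G).lowerCentralSeries k) (g : G) {m : ℕ}
    (hxm : x ^ m ∈ (⊤ : Subgroup G).lowerCentralSeries (k + 1)) :
    ⁅x, g⁆ ^ m ∈ (⊤ : Subgroup G).lowerCentralSeries (k + 2) := by
  have h2 : ⁅x ^ m, g⁆ ∈ (⊤ : Subgroup G).lowerCentralSeries (k + 2) := by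
    rw [show (⊤ : Subgroup G).lowerCentralSeries (k + 2) = ⁅(⊤ : Subgroup G).lowerCentralSeries (k + 1), ⊤⁆ from rfl]
    exact Subgroup.commutator_mem_commutator hxm (Subgroup.mem_top g)
  have := aux_comm_pow k hx g m
  rw [(QuotientGroup.eq_one_iff _).2 h2] at this
  exact (QuotientGroup.eq_one_iff _).1 this

end Aux

/-- If the `k`-th generalised commutator subgroup
`Ḡ_k = {g : g^n ∈ G_k for some n ≥ 1}` contains `Ḡ_{k+1}` with finite index, then
the generalised commutator subgroups stabilise at `Ḡ_k`, and in particular the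
intersection of all of them is `Ḡ_k`.  (The subgroups `Ḡ_i` are given as data
together with the identification of their underlying sets.) -/
theorem generalised_commutator_stabilises {G : Type*} [Group G] (k : ℕ)
    (Gbar : ℕ → Subgroup G)
    (hGbar : ∀ i, (Gbar i : Set G) =
      {g : G | ∃ n : ℕ, 0 < n ∧ g ^ n ∈ (⊤ : Subgroup G).lowerCentralSeries i})
    (hfin : (Gbar (k + 1)).relIndex (Gbar k) ≠ 0) :
    (∀ j : ℕ, k ≤ j → Gbar j = Gbar k) ∧
    (⋂ i : ℕ, (Gbar i : Set G)) = (Gbar k : Set G) := by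
  have mem_iff : ∀ i (g : G), g ∈ Gbar i ↔ ∃ n : ℕ, 0 < n ∧ g ^ n ∈ (⊤ : Subgroup G).lowerCentralSeries i :=
    fun i g => Set.ext_iff.mp (hGbar i) g
  -- antitone
  have hanti : ∀ i, Gbar (i + 1) ≤ Gbar i := by
    intro i g hg
    rcases (mem_iff _ g).1 hg with ⟨n, hn, hgn⟩
    exact (mem_iff _ g).2 ⟨n, hn, Subgroup.lowerCentralSeries_antitone ⊤ (Nat.le_succ i) hgn⟩
  -- base step: Gbar k = Gbar (k+1)
  have hbase : Gbar k = Gbar (k + 1) := by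
    apply le_antisymm
    · intro g hg
      obtain ⟨n, hn, -, hgn⟩ := Subgroup.exists_pow_mem_of_relIndex_ne_zero hfin hg
      rcases (mem_iff _ (g ^ n)).1 hgn.1 with ⟨m, hm, hgnm⟩
      refine (mem_iff _ g).2 ⟨n * m, Nat.mul_pos hn hm, ?_⟩
      rwa [pow_mul]
    · exact hanti k
  -- inductive step
  have hstep : ∀ i, Gbar i = Gbar (i + 1) → Gbar (i + 1) = Gbar (i + 2) := by
    intro i hi
    apply le_antisymm
    · -- first: (⊤ : Subgroup G).lowerCentralSeries (i+1) ≤ Gbar (i+2)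
      have hlcs : (⊤ : Subgroup G).lowerCentralSeries (i + 1) ≤ Gbar (i + 2) := by
        rw [show (⊤ : Subgroup G).lowerCentralSeries (i + 1) = ⁅(⊤ : Subgroup G).lowerCentralSeries i, ⊤⁆ from rfl]
        rw [Subgroup.commutator_le]
        intro x hx g _
        have hxbar : x ∈ Gbar (i + 1) := by
          rw [← hi]
          exact (mem_iff _ x).2 ⟨1, one_pos, by simpa using hx⟩
        rcases (mem_iff _ x).1 hxbar with ⟨m, hm, hxm⟩
        exact (mem_iff _ ⁅x, g⁆).2 ⟨m, hm, aux_key i hx g hxm⟩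
      intro g hg
      rcases (mem_iff _ g).1 hg with ⟨n, hn, hgn⟩
      rcases (mem_iff _ (g ^ n)).1 (hlcs hgn) with ⟨m, hm, hgnm⟩
      refine (mem_iff _ g).2 ⟨n * m, Nat.mul_pos hn hm, ?_⟩
      rwa [pow_mul]
    · exact hanti (i + 1)
  -- all Gbar (k + i) = Gbar k
  have hall : ∀ i : ℕ, Gbar (k + i) = Gbar k := by
    intro i
    induction i with
    | zero => rfl
    | succ i ih =>
      have hsucc : ∀ j : ℕ, Gbar (k + j) = Gbar (k + j + 1) := by
        intro j
        induction j with
        | zero => exact hbase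
        | succ j ihj => exact hstep (k + j) ihj
      rw [show k + (i + 1) = (k + i) + 1 from rfl, ← hsucc i, ih]
    
  have h1 : ∀ j : ℕ, k ≤ j → Gbar j = Gbar k := by
    intro j hj
    obtain ⟨i, rfl⟩ := Nat.exists_eq_add_of_le hj
    exact hall i
  refine ⟨h1, ?_⟩
  apply Set.Subset.antisymm
  · exact Set.iInter_subset _ k
  · -- Gbar k ⊆ every Gbar i
    have hle : ∀ i j : ℕ, i ≤ j → Gbar j ≤ Gbar i := by
      intro i j hij
      induction hij with
      | refl => exact le_refl _
      | step h ih => exact le_trans (hanti _) ih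
    refine Set.subset_iInter fun i => ?_
    rcases le_or_gt i k with h | h
    · exact SetLike.coe_subset_coe.2 (hle i k h)
    · rw [h1 i h.le]
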